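/- Let c > 0 and define on (0, ∞) the 2×2 antihermitian matrix functions T₁(s) = (c/(2 sinh(cs))) · i[[0,1],[1,0]], T₂(s) = (c/(2 sinh(cs))) · i[[0,-i],[i,0]], T₃(s) = (c/(2 tanh(cs))) · i[[1,0],[0,-1]]. Then (T₁, T₂, T₃) satisfies Nahm's equations dT₁/ds = [T₂, T₃], dT₂/ds = [T₃, T₁], dT₃/ds = [T₁, T₂] on (0, ∞). -/

import Mathlib

open Matrix Complex

set_option maxHeartbeats 1600000 in
/-- The exact rank-2 Nahm solution for two Dirac monopoles at `(0,0,±c/2)`. -/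
theorem n2_hyperbolic_nahm_solution (c : ℝ) (hc : 0 < c)
    (T₁ T₂ T₃ : ℝ → Matrix (Fin 2) (Fin 2) ℂ)
    (hT₁ : ∀ s, T₁ s = ((c / (2 * Real.sinh (c * s)) : ℝ) : ℂ) • (Complex.I • !![0, 1; 1, 0]))
    (hT₂ : ∀ s, T₂ s = ((c / (2 * Real.sinh (c * s)) : ℝ) : ℂ) •
      (Complex.I • !![0, -Complex.I; Complex.I, 0]))
    (hT₃ : ∀ s, T₃ s = ((c / (2 * Real.tanh (c * s)) : ℝ) : ℂ) • (Complex.I • !![1, 0; 0, -1])) :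
    ∀ s : ℝ, 0 < s → ∀ i j : Fin 2,
      HasDerivAt (fun t => T₁ t i j) ((T₂ s * T₃ s - T₃ s * T₂ s) i j) s ∧
      HasDerivAt (fun t => T₂ t i j) ((T₃ s * T₁ s - T₁ s * T₃ s) i j) s ∧
      HasDerivAt (fun t => T₃ t i j) ((T₁ s * T₂ s - T₂ s * T₁ s) i j) s := by
  intro s hs i j
  have hs' : 0 < c * s := mul_pos hc hs
  have hsinh : Real.sinh (c * s) ≠ 0 := (Real.sinh_pos_iff.mpr hs').ne'
  have hcosh : Real.cosh (c * s) ≠ 0 := (Real.cosh_pos (c * s)).ne'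
  have hS : ((Real.sinh (c * s) : ℝ) : ℂ) ≠ 0 := Complex.ofReal_ne_zero.mpr hsinh
  have hC : ((Real.cosh (c * s) : ℝ) : ℂ) ≠ 0 := Complex.ofReal_ne_zero.mpr hcosh
  have hS' : Complex.sinh ((c : ℂ) * (s : ℂ)) ≠ 0 := by
    rw [← Complex.ofReal_mul, ← Complex.ofReal_sinh]; exact hS
  have hC' : Complex.cosh ((c : ℂ) * (s : ℂ)) ≠ 0 := by
    rw [← Complex.ofReal_mul, ← Complex.ofReal_cosh]; exact hC
  -- derivative of f(t) = c / (2 sinh (c t))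
  have hinner : HasDerivAt (fun t : ℝ => Real.sinh (c * t)) (Real.cosh (c * s) * c) s := by
    have h1 : HasDerivAt (fun t : ℝ => c * t) c s := by
      simpa using (hasDerivAt_id s).const_mul c
    exact (Real.hasDerivAt_sinh (c * s)).comp s h1
  have hfR : HasDerivAt (fun t : ℝ => c / (2 * Real.sinh (c * t)))
      (-(c ^ 2 * Real.cosh (c * s)) / (2 * Real.sinh (c * s) ^ 2)) s := by
    have hu : HasDerivAt (fun t : ℝ => 2 * Real.sinh (c * t)) (2 * (Real.cosh (c * s) * c)) s :=
      hinner.const_mul 2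
    have := (hasDerivAt_const s c).div hu (mul_ne_zero two_ne_zero hsinh)
    convert this using 1 <;> try rfl
    field_simp
    ring
  -- derivative of g(t) = c / (2 tanh (c t))
  have hgR : HasDerivAt (fun t : ℝ => c / (2 * Real.tanh (c * t)))
      (-(c ^ 2) / (2 * Real.sinh (c * s) ^ 2)) s := by
    have heq : (fun t : ℝ => c / (2 * Real.tanh (c * t)))
        = fun t : ℝ => c * Real.cosh (c * t) / (2 * Real.sinh (c * t)) := by
      funext t
      rw [Real.tanh_eq_sinh_div_cosh]
      rcases eq_or_ne (Real.sinh (c * t)) 0 with h0 | h0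
      · simp [h0]
      · have hc0 := (Real.cosh_pos (c * t)).ne'
        field_simp
        try ring
    rw [heq]
    have hu : HasDerivAt (fun t : ℝ => c * Real.cosh (c * t))
        (c * (Real.sinh (c * s) * c)) s := by
      have h1 : HasDerivAt (fun t : ℝ => c * t) c s := by
        simpa using (hasDerivAt_id s).const_mul c
      exact ((Real.hasDerivAt_cosh (c * s)).comp s h1).const_mul c
    have hv : HasDerivAt (fun t : ℝ => 2 * Real.sinh (c * t)) (2 * (Real.cosh (c * s) * c)) s :=
      hinner.const_mul 2
    have key := hu.div hv (mul_ne_zero two_ne_zero hsinh)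
    convert key using 1 <;> try rfl
    have hc2 : Real.cosh (c * s) ^ 2 - Real.sinh (c * s) ^ 2 = 1 :=
      Real.cosh_sq_sub_sinh_sq (c * s)
    field_simp
    linear_combination hc2
  have hf := hfR.ofReal_comp
  have hg := hgR.ofReal_comp
  refine ⟨?_, ?_, ?_⟩ <;> fin_cases i <;> fin_cases j <;>
  · simp only [hT₁, hT₂, hT₃]
    norm_num [Matrix.mul_apply, Fin.sum_univ_two]
    first
    | exact hasDerivAt_const s 0
    | simpa using hasDerivAt_const s (0 : ℂ)
    | (convert hf.mul_const Complex.I using 1 <;> try rfl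
       · funext t; push_cast; ring
       · try rw [Complex.tanh_eq_sinh_div_cosh]
         push_cast; field_simp; ring_nf
         try simp only [Complex.I_sq]
         try ring)
    | (convert hf.mul_const (-Complex.I) using 1 <;> try rfl
       · funext t; push_cast; ring
       · try rw [Complex.tanh_eq_sinh_div_cosh]
         push_cast; field_simp; ring_nf
         try simp only [Complex.I_sq]
         try ring)
    | (convert hf using 1 <;> try rfl
       · funext t; push_cast; ring
       · try rw [Complex.tanh_eq_sinh_div_cosh]
         push_cast; field_simp; ring_nf
         try simp only [Complex.I_sq]
         try ring)
    | (convert hf.neg using 1 <;> try rfl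
       · funext t; simp only [Pi.neg_apply]; push_cast; ring
       · try rw [Complex.tanh_eq_sinh_div_cosh]
         push_cast; field_simp; ring_nf
         try simp only [Complex.I_sq]
         try ring)
    | (convert hg.mul_const Complex.I using 1 <;> try rfl
       · funext t; push_cast; ring
       · try rw [Complex.tanh_eq_sinh_div_cosh]
         push_cast; field_simp; ring_nf
         try simp only [Complex.I_sq]
         try ring)
    | (convert hg.mul_const (-Complex.I) using 1 <;> try rfl
       · funext t; push_cast; ring
       · try rw [Complex.tanh_eq_sinh_div_cosh]
         push_cast; field_simp; ring_nf
         try simp only [Complex.I_sq]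
         try ring)
    | (convert (hg.mul_const Complex.I).neg using 1 <;> try rfl
       · funext t; simp only [Pi.neg_apply]; push_cast; ring
       · try rw [Complex.tanh_eq_sinh_div_cosh]
         push_cast; field_simp; ring_nf
         try simp only [Complex.I_sq]
         try ring)
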